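/- Let k be a field of characteristic zero, R = k[a,b], B = R[X,Y,Z], and D the R-derivation with DX = b, DY = -a, DZ = aX + bY. Set u = aX + bY, v = bZ - uX, w = aZ + uY. Then Du = Dv = Dw = 0 and b·w - a·v = u². -/
import Mathlib


open MvPolynomial

/-- `R = k[a,b]` with `a = X 0`, `b = X 1`. -/
abbrev Stmt7R (k : Type*) [Field k] := MvPolynomial (Fin 2) k

/-- `B = R[X,Y,Z]` with `X = X 0`, `Y = X 1`, `Z = X 2`. -/
abbrev Stmt7B (k : Type*) [Field k] := MvPolynomial (Fin 3) (Stmt7R k)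

/-- Let `k` be a field of characteristic zero, `R = k[a,b]`, `B = R[X,Y,Z]`, and let
`D` be the `R`-derivation with `DX = b`, `DY = -a`, `DZ = aX + bY`.  Set
`u = aX + bY`, `v = bZ - uX`, `w = aZ + uY`.  Then `Du = Dv = Dw = 0` and
`b·w - a·v = u²`. -/
theorem stmt7 {k : Type*} [Field k] [CharZero k]
    (D : Derivation (Stmt7R k) (Stmt7B k) (Stmt7B k))
    (hX : D (X 0) = (C (X 1) : Stmt7B k))
    (hY : D (X 1) = -(C (X 0) : Stmt7B k))
    (hZ : D (X 2) = (C (X 0) : Stmt7B k) * X 0 + (C (X 1) : Stmt7B k) * X 1)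
    (u v w : Stmt7B k)
    (hu : u = (C (X 0) : Stmt7B k) * X 0 + (C (X 1) : Stmt7B k) * X 1)
    (hv : v = (C (X 1) : Stmt7B k) * X 2 - u * X 0)
    (hw : w = (C (X 0) : Stmt7B k) * X 2 + u * X 1) :
    D u = 0 ∧ D v = 0 ∧ D w = 0 ∧
      (C (X 1) : Stmt7B k) * w - (C (X 0) : Stmt7B k) * v = u ^ 2 := by
  have hC : ∀ (r : Stmt7R k) (x : Stmt7B k), D ((C r : Stmt7B k) * x) = (C r : Stmt7B k) * D x := by
    intro r x
    rw [show (C r : Stmt7B k) * x = r • x from (Algebra.smul_def r x).symm, D.map_smul,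
      Algebra.smul_def]
    rfl
  have hDu : D u = 0 := by
    rw [hu, map_add, hC, hC, hX, hY]; ring
  refine ⟨hDu, ?_, ?_, ?_⟩
  · rw [hv, map_sub, hC, D.leibniz, hX, hZ, hDu, hu]; simp only [smul_eq_mul]; ring
  · rw [hw, map_add, hC, D.leibniz, hY, hZ, hDu, hu]; simp only [smul_eq_mul]; ring
  · rw [hv, hw, hu]; ring
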